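/- Let f : BUC_η → ℝⁿ be Lipschitz on bounded sets and let x : (-∞, τ) → ℝⁿ be a maximal solution of x(t) = φ(0) + ∫₀ᵗ f(x_s)ds for t ∈ [0,τ), x(t) = φ(t) for t ≤ 0, with φ ∈ BUC_η. If sup_{t ∈ [0,τ)} ‖x(t)‖ < ∞ and τ < ∞, then the solution can be extended beyond τ; equivalently, if τ < ∞ is maximal then limsup_{t→τ⁻} ‖x(t)‖ = +∞. -/

import Mathlib

open Set Filter Topology

noncomputable def etaNorm (η : ℝ) {F : Type*} [NormedAddCommGroup F] (φ : ℝ → F) : ℝ :=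
  sSup ((fun θ => Real.exp (η * θ) * ‖φ θ‖) '' Set.Iic 0)

def BUCmem (η : ℝ) {F : Type*} [NormedAddCommGroup F] [NormedSpace ℝ F] (φ : ℝ → F) : Prop :=
  ContinuousOn φ (Set.Iic 0) ∧
  BddAbove ((fun θ => Real.exp (η * θ) * ‖φ θ‖) '' Set.Iic 0) ∧
  UniformContinuousOn (fun θ => Real.exp (η * θ) • φ θ) (Set.Iic 0)

def BUC1mem (η : ℝ) {F : Type*} [NormedAddCommGroup F] [NormedSpace ℝ F] (φ φ' : ℝ → F) : Prop :=
  BUCmem η φ ∧ BUCmem η φ' ∧ ∀ θ ≤ (0:ℝ), HasDerivWithinAt φ (φ' θ) (Set.Iic 0) θ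

section Helpers

set_option linter.unusedSectionVars false

variable {F : Type*} [NormedAddCommGroup F] [NormedSpace ℝ F] {η : ℝ} {φ ψ : ℝ → F}

lemma etaNorm_nonneg (η : ℝ) (φ : ℝ → F) : 0 ≤ etaNorm η φ := by
  apply Real.sSup_nonneg
  rintro v ⟨θ, -, rfl⟩
  positivity

lemma etaNorm_le {C : ℝ} (hC : 0 ≤ C)
    (h : ∀ θ ≤ (0:ℝ), Real.exp (η * θ) * ‖φ θ‖ ≤ C) : etaNorm η φ ≤ C := by
  apply Real.sSup_le _ hC
  rintro v ⟨θ, hθ, rfl⟩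
  exact h θ hθ

lemma le_etaNorm (hb : BddAbove ((fun θ => Real.exp (η * θ) * ‖φ θ‖) '' Set.Iic 0))
    {θ : ℝ} (hθ : θ ≤ 0) : Real.exp (η * θ) * ‖φ θ‖ ≤ etaNorm η φ :=
  le_csSup hb ⟨θ, hθ, rfl⟩

lemma etaNorm_sub_le
    (hbφ : BddAbove ((fun θ => Real.exp (η * θ) * ‖φ θ‖) '' Set.Iic 0))
    (hbψ : BddAbove ((fun θ => Real.exp (η * θ) * ‖ψ θ‖) '' Set.Iic 0)) :
    etaNorm η (fun θ => φ θ - ψ θ) ≤ etaNorm η φ + etaNorm η ψ := by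
  apply etaNorm_le (add_nonneg (etaNorm_nonneg η φ) (etaNorm_nonneg η ψ))
  intro θ hθ
  calc Real.exp (η * θ) * ‖φ θ - ψ θ‖
      ≤ Real.exp (η * θ) * (‖φ θ‖ + ‖ψ θ‖) := by
        gcongr; exact norm_sub_le _ _
    _ = Real.exp (η * θ) * ‖φ θ‖ + Real.exp (η * θ) * ‖ψ θ‖ := by ring
    _ ≤ etaNorm η φ + etaNorm η ψ := add_le_add (le_etaNorm hbφ hθ) (le_etaNorm hbψ hθ)

lemma uc_glue {g : ℝ → F} {c d : ℝ} (hcd : c ≤ d)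
    (h1 : UniformContinuousOn g (Iic c)) (h2 : UniformContinuousOn g (Icc c d)) :
    UniformContinuousOn g (Iic d) := by
  rw [Metric.uniformContinuousOn_iff] at h1 h2 ⊢
  intro ε hε
  obtain ⟨δ₁, hδ₁, H1⟩ := h1 (ε/2) (by linarith)
  obtain ⟨δ₂, hδ₂, H2⟩ := h2 (ε/2) (by linarith)
  refine ⟨min δ₁ δ₂, lt_min hδ₁ hδ₂, ?_⟩
  intro a ha b hb hab
  have hd1 : dist a b < δ₁ := lt_of_lt_of_le hab (min_le_left _ _)
  have hd2 : dist a b < δ₂ := lt_of_lt_of_le hab (min_le_right _ _)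
  have hab1 : |a - b| < δ₁ := by rwa [Real.dist_eq] at hd1
  obtain ⟨l1, r1⟩ := abs_lt.1 hab1
  have hab2 : |a - b| < δ₂ := by rwa [Real.dist_eq] at hd2
  obtain ⟨l2, r2⟩ := abs_lt.1 hab2
  simp only [mem_Iic] at ha hb
  have halfε : ε/2 < ε := by linarith
  rcases le_or_gt a c with hac | hac <;> rcases le_or_gt b c with hbc | hbc
  · exact lt_trans (H1 a (mem_Iic.2 hac) b (mem_Iic.2 hbc) hd1) halfε
  · have t1 := H1 a (mem_Iic.2 hac) c (mem_Iic.2 le_rfl)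
      (by rw [Real.dist_eq, abs_lt]; constructor <;> linarith)
    have t2 := H2 c ⟨le_rfl, hcd⟩ b ⟨le_of_lt hbc, hb⟩
      (by rw [Real.dist_eq, abs_lt]; constructor <;> linarith)
    calc dist (g a) (g b) ≤ dist (g a) (g c) + dist (g c) (g b) := dist_triangle _ _ _
      _ < ε/2 + ε/2 := add_lt_add t1 t2
      _ = ε := by ring
  · have t1 := H1 b (mem_Iic.2 hbc) c (mem_Iic.2 le_rfl)
      (by rw [Real.dist_eq, abs_lt]; constructor <;> linarith)
    have t2 := H2 c ⟨le_rfl, hcd⟩ a ⟨le_of_lt hac, ha⟩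
      (by rw [Real.dist_eq, abs_lt]; constructor <;> linarith)
    calc dist (g a) (g b) ≤ dist (g a) (g c) + dist (g c) (g b) := dist_triangle _ _ _
      _ = dist (g c) (g a) + dist (g b) (g c) := by rw [dist_comm (g a), dist_comm (g c) (g b)]
      _ < ε/2 + ε/2 := add_lt_add t2 t1
      _ = ε := by ring
  · exact lt_trans (H2 a ⟨le_of_lt hac, ha⟩ b ⟨le_of_lt hbc, hb⟩ hd2) halfε

lemma exp_neg_lipschitz {a b : ℝ} (ha : 0 ≤ a) (hb : 0 ≤ b) :
    |Real.exp (-a) - Real.exp (-b)| ≤ |a - b| := by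
  wlog h : a ≤ b generalizing a b
  · rw [abs_sub_comm, abs_sub_comm a b]; exact this hb ha (le_of_not_ge h)
  have h1 : Real.exp (-b) ≤ Real.exp (-a) := Real.exp_le_exp.2 (by linarith)
  rw [abs_of_nonneg (by linarith), abs_of_nonpos (by linarith)]
  have hexp1 : Real.exp (-(b-a)) ≤ 1 := Real.exp_le_one_iff.2 (by linarith)
  have hexp2 := Real.add_one_le_exp (-(b-a))
  have key : Real.exp (-a) - Real.exp (-b) ≤ b - a := by
    have hm : Real.exp (-a) * (1 - Real.exp (-(b-a))) ≤ 1 * (b - a) := by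
      apply mul_le_mul (Real.exp_le_one_iff.2 (by linarith)) (by linarith) (by linarith) (by norm_num)
    calc Real.exp (-a) - Real.exp (-b)
        = Real.exp (-a) * (1 - Real.exp (-(b-a))) := by
          rw [mul_sub, mul_one, ← Real.exp_add]; ring_nf
      _ ≤ 1 * (b - a) := hm
      _ = b - a := one_mul _
  linarith

end Helpers

section Helpers2

set_option linter.unusedSectionVars false

variable {F : Type*} [NormedAddCommGroup F] [NormedSpace ℝ F] {η : ℝ} {φ ψ y : ℝ → F}
variable {T M ξ κ : ℝ}

lemma weighted_eq (η : ℝ) (s θ : ℝ) (v : F) :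
    Real.exp (η * θ) • v = Real.exp (-(η * s)) • Real.exp (η * (s + θ)) • v := by
  rw [smul_smul, ← Real.exp_add]
  ring_nf

lemma norm_weighted_le (hb : BddAbove ((fun θ => Real.exp (η * θ) * ‖φ θ‖) '' Set.Iic 0))
    {u : ℝ} (hu : u ≤ 0) : ‖Real.exp (η * u) • φ u‖ ≤ etaNorm η φ := by
  rw [norm_smul, Real.norm_eq_abs, abs_of_pos (Real.exp_pos _)]
  exact le_etaNorm hb hu

lemma shift_pointwise_bound (hη : 0 < η)
    (hφb : BddAbove ((fun θ => Real.exp (η * θ) * ‖φ θ‖) '' Set.Iic 0))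
    (hy0 : ∀ u ≤ (0:ℝ), y u = φ u)
    (hyM : ∀ u ∈ Icc (0:ℝ) T, ‖y u‖ ≤ M) (hM : 0 ≤ M)
    {s : ℝ} (hs : s ∈ Icc (0:ℝ) T) :
    ∀ θ ≤ (0:ℝ), Real.exp (η * θ) * ‖y (s + θ)‖ ≤ max (etaNorm η φ) M := by
  intro θ hθ
  obtain ⟨hs0, hsT⟩ := hs
  rcases le_or_gt (s + θ) 0 with hsθ | hsθ
  · rw [hy0 _ hsθ]
    have heq : Real.exp (η * θ) * ‖φ (s + θ)‖
        = Real.exp (-(η * s)) * (Real.exp (η * (s + θ)) * ‖φ (s + θ)‖) := by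
      rw [← mul_assoc, ← Real.exp_add]; ring_nf
    rw [heq]
    calc Real.exp (-(η * s)) * (Real.exp (η * (s + θ)) * ‖φ (s + θ)‖)
        ≤ 1 * etaNorm η φ := by
          apply mul_le_mul (Real.exp_le_one_iff.2 (by nlinarith)) (le_etaNorm hφb hsθ)
            (by positivity) (by norm_num)
      _ ≤ max (etaNorm η φ) M := by rw [one_mul]; exact le_max_left _ _
  · have hmem : s + θ ∈ Icc (0:ℝ) T := ⟨le_of_lt hsθ, by linarith⟩
    calc Real.exp (η * θ) * ‖y (s + θ)‖ ≤ 1 * M := by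
          apply mul_le_mul (Real.exp_le_one_iff.2 (by nlinarith)) (hyM _ hmem)
            (norm_nonneg _) (by norm_num)
      _ ≤ max (etaNorm η φ) M := by rw [one_mul]; exact le_max_right _ _

lemma etaNorm_shift_le (hη : 0 < η)
    (hφb : BddAbove ((fun θ => Real.exp (η * θ) * ‖φ θ‖) '' Set.Iic 0))
    (hy0 : ∀ u ≤ (0:ℝ), y u = φ u)
    (hyM : ∀ u ∈ Icc (0:ℝ) T, ‖y u‖ ≤ M) (hM : 0 ≤ M)
    {s : ℝ} (hs : s ∈ Icc (0:ℝ) T) :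
    etaNorm η (fun θ => y (s + θ)) ≤ max (etaNorm η φ) M :=
  etaNorm_le (le_trans hM (le_max_right _ _))
    (shift_pointwise_bound hη hφb hy0 hyM hM hs)

lemma bucmem_shift (hη : 0 < η) (hφ : BUCmem η φ)
    (hy0 : ∀ u ≤ (0:ℝ), y u = φ u) (hyc : ContinuousOn y (Iic T))
    (hyM : ∀ u ∈ Icc (0:ℝ) T, ‖y u‖ ≤ M) (hM : 0 ≤ M)
    {s : ℝ} (hs : s ∈ Icc (0:ℝ) T) :
    BUCmem η (fun θ => y (s + θ)) := by
  obtain ⟨hs0, hsT⟩ := hs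
  have hmap : ∀ θ ∈ Iic (0:ℝ), s + θ ∈ Iic T := fun θ hθ => by
    simp only [mem_Iic] at *; linarith
  refine ⟨?_, ?_, ?_⟩
  · exact hyc.comp ((continuous_const.add continuous_id).continuousOn) hmap
  · exact ⟨max (etaNorm η φ) M, by
      rintro v ⟨θ, hθ, rfl⟩
      exact shift_pointwise_bound hη hφ.2.1 hy0 hyM hM ⟨hs0, hsT⟩ θ hθ⟩
  · -- uniform continuity of θ ↦ exp (η θ) • y (s + θ)
    have hns : -s ≤ (0:ℝ) := by linarith
    apply uc_glue hns
    · -- on Iic (-s)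
      rw [Metric.uniformContinuousOn_iff]
      intro ε hε
      obtain ⟨δ, hδ, H⟩ := Metric.uniformContinuousOn_iff.1 hφ.2.2 ε hε
      refine ⟨δ, hδ, ?_⟩
      intro a ha b hb hab
      simp only [mem_Iic] at ha hb
      have hrw : ∀ u : ℝ, u ≤ -s →
          Real.exp (η * u) • y (s + u)
            = Real.exp (-(η * s)) • (Real.exp (η * (s + u)) • φ (s + u)) := by
        intro u hu
        rw [hy0 _ (by linarith), weighted_eq η s u]
      rw [hrw a ha, hrw b hb, dist_smul₀]
      have h1 : dist (Real.exp (η * (s + a)) • φ (s + a))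
          (Real.exp (η * (s + b)) • φ (s + b)) < ε := by
        apply H (s + a) (mem_Iic.2 (by linarith)) (s + b) (mem_Iic.2 (by linarith))
        rwa [Real.dist_eq, add_sub_add_left_eq_sub, ← Real.dist_eq]
      calc ‖Real.exp (-(η * s))‖ * dist (Real.exp (η * (s + a)) • φ (s + a))
            (Real.exp (η * (s + b)) • φ (s + b))
          ≤ 1 * dist (Real.exp (η * (s + a)) • φ (s + a))
            (Real.exp (η * (s + b)) • φ (s + b)) := by
            apply mul_le_mul_of_nonneg_right _ dist_nonneg
            rw [Real.norm_eq_abs, abs_of_pos (Real.exp_pos _)]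
            exact Real.exp_le_one_iff.2 (by nlinarith)
        _ < ε := by rwa [one_mul]
    · -- on Icc (-s) 0
      apply IsCompact.uniformContinuousOn_of_continuous isCompact_Icc
      apply ContinuousOn.smul
      · exact (Real.continuous_exp.comp (continuous_const.mul continuous_id)).continuousOn
      · apply hyc.comp ((continuous_const.add continuous_id).continuousOn)
        intro θ hθ
        simp only [mem_Icc] at hθ
        simp only [mem_Iic, id_eq, Pi.add_apply]
        linarith [hθ.2]

end Helpers2

section Helpers3

set_option linter.unusedSectionVars false

variable {F : Type*} [NormedAddCommGroup F] [NormedSpace ℝ F] {η : ℝ} {φ ψ y : ℝ → F}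
variable {T M ξ κ : ℝ}

lemma shift_diff_mod (hη : 0 < η) (hφ : BUCmem η φ)
    (hy0 : ∀ u ≤ (0:ℝ), y u = φ u) (hyc : ContinuousOn y (Iic T)) (hT : 0 ≤ T) :
    ∀ ε > (0:ℝ), ∃ δ > (0:ℝ), ∀ s ∈ Icc (0:ℝ) T, ∀ s' ∈ Icc (0:ℝ) T, |s - s'| < δ →
      etaNorm η (fun θ => y (s + θ) - y (s' + θ)) ≤ ε := by
  set ξφ := etaNorm η φ with hξφdef
  have hξφ0 : 0 ≤ ξφ := etaNorm_nonneg η φ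
  have hsub : Icc (-1 : ℝ) T ⊆ Iic T := Icc_subset_Iic_self
  have hyU := isCompact_Icc.uniformContinuousOn_of_continuous (hyc.mono hsub)
  rw [Metric.uniformContinuousOn_iff] at hyU
  have hgU := Metric.uniformContinuousOn_iff.1 hφ.2.2
  intro ε hε
  obtain ⟨δ₁, hδ₁, H1⟩ := hyU (ε/2) (by linarith)
  obtain ⟨δ₂, hδ₂, H2⟩ := hgU (ε/2) (by linarith)
  have hden : 0 < 2 * η * (ξφ + 1) := by positivity
  refine ⟨min (min δ₁ δ₂) (min 1 (ε / (2 * η * (ξφ + 1)))), by positivity, ?_⟩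
  intro s hs s' hs' hss
  have hd1 : |s - s'| < δ₁ := lt_of_lt_of_le hss (le_trans (min_le_left _ _) (min_le_left _ _))
  have hd2 : |s - s'| < δ₂ := lt_of_lt_of_le hss (le_trans (min_le_left _ _) (min_le_right _ _))
  have hd3 : |s - s'| < 1 := lt_of_lt_of_le hss (le_trans (min_le_right _ _) (min_le_left _ _))
  have hd4 : |s - s'| ≤ ε / (2 * η * (ξφ + 1)) :=
    le_of_lt (lt_of_lt_of_le hss (le_trans (min_le_right _ _) (min_le_right _ _)))
  obtain ⟨hs0, hsT⟩ := hs
  obtain ⟨hs0', hsT'⟩ := hs'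
  obtain ⟨hl3, hr3⟩ := abs_lt.1 hd3
  apply etaNorm_le (le_of_lt hε)
  intro θ hθ
  have hexpθ : Real.exp (η * θ) ≤ 1 := Real.exp_le_one_iff.2 (by nlinarith)
  by_cases hcase : -1 ≤ s + θ ∧ -1 ≤ s' + θ
  · -- both in Icc (-1) T
    have h1 : dist (y (s + θ)) (y (s' + θ)) < ε/2 :=
      H1 (s + θ) ⟨hcase.1, by linarith⟩ (s' + θ) ⟨hcase.2, by linarith⟩
        (by rw [Real.dist_eq]; simpa using hd1)
    rw [dist_eq_norm] at h1
    calc Real.exp (η * θ) * ‖y (s + θ) - y (s' + θ)‖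
        ≤ 1 * ‖y (s + θ) - y (s' + θ)‖ :=
          mul_le_mul_of_nonneg_right hexpθ (norm_nonneg _)
      _ = ‖y (s + θ) - y (s' + θ)‖ := one_mul _
      _ ≤ ε := by linarith
  · -- both ≤ 0
    have hboth : s + θ ≤ 0 ∧ s' + θ ≤ 0 := by
      rcases not_and_or.1 hcase with h | h
      · push_neg at h
        constructor <;> linarith
      · push_neg at h
        constructor <;> linarith
    rw [hy0 _ hboth.1, hy0 _ hboth.2]
    have hkey : Real.exp (η * θ) * ‖φ (s + θ) - φ (s' + θ)‖
        = ‖Real.exp (-(η * s)) • (Real.exp (η * (s + θ)) • φ (s + θ))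
            - Real.exp (-(η * s')) • (Real.exp (η * (s' + θ)) • φ (s' + θ))‖ := by
      rw [← weighted_eq, ← weighted_eq, ← smul_sub, norm_smul, Real.norm_eq_abs,
        abs_of_pos (Real.exp_pos _)]
    rw [hkey]
    have hg2 : dist (Real.exp (η * (s + θ)) • φ (s + θ))
        (Real.exp (η * (s' + θ)) • φ (s' + θ)) < ε/2 :=
      H2 (s + θ) (mem_Iic.2 hboth.1) (s' + θ) (mem_Iic.2 hboth.2)
        (by rw [Real.dist_eq]; simpa using hd2)
    rw [dist_eq_norm] at hg2
    set A := Real.exp (η * (s + θ)) • φ (s + θ) with hA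
    set B := Real.exp (η * (s' + θ)) • φ (s' + θ) with hB
    have hBnorm : ‖B‖ ≤ ξφ := norm_weighted_le hφ.2.1 hboth.2
    have hlip : |Real.exp (-(η * s)) - Real.exp (-(η * s'))| ≤ η * |s - s'| := by
      have := exp_neg_lipschitz (mul_nonneg (le_of_lt hη) hs0) (mul_nonneg (le_of_lt hη) hs0')
      calc |Real.exp (-(η * s)) - Real.exp (-(η * s'))| ≤ |η * s - η * s'| := this
        _ = η * |s - s'| := by rw [← mul_sub, abs_mul, abs_of_pos hη]
    calc ‖Real.exp (-(η * s)) • A - Real.exp (-(η * s')) • B‖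
        ≤ ‖Real.exp (-(η * s)) • (A - B)‖
          + ‖(Real.exp (-(η * s)) - Real.exp (-(η * s'))) • B‖ := by
          apply le_trans _ (norm_add_le _ _)
          apply le_of_eq; congr 1
          rw [smul_sub, sub_smul]; abel
      _ = Real.exp (-(η * s)) * ‖A - B‖
          + |Real.exp (-(η * s)) - Real.exp (-(η * s'))| * ‖B‖ := by
          rw [norm_smul, norm_smul, Real.norm_eq_abs, Real.norm_eq_abs,
            abs_of_pos (Real.exp_pos _)]
      _ ≤ 1 * (ε/2) + (η * |s - s'|) * ξφ := by
          apply add_le_add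
          · apply mul_le_mul (Real.exp_le_one_iff.2 (by nlinarith)) (le_of_lt hg2)
              (norm_nonneg _) (by norm_num)
          · exact mul_le_mul hlip hBnorm (norm_nonneg _)
              (mul_nonneg (le_of_lt hη) (abs_nonneg _))
      _ ≤ ε/2 + ε/2 := by
          apply add_le_add (by linarith)
          have : η * |s - s'| * ξφ ≤ η * (ε / (2 * η * (ξφ + 1))) * (ξφ + 1) := by
            apply mul_le_mul (mul_le_mul_of_nonneg_left hd4 (le_of_lt hη)) (by linarith)
              hξφ0 (by positivity)
          calc η * |s - s'| * ξφ ≤ η * (ε / (2 * η * (ξφ + 1))) * (ξφ + 1) := this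
            _ = ε/2 := by field_simp
      _ = ε := by ring

lemma contOn_f_shift {G : Type*} [NormedAddCommGroup G] {f : (ℝ → F) → G}
    (hη : 0 < η) (hφ : BUCmem η φ)
    (hy0 : ∀ u ≤ (0:ℝ), y u = φ u) (hyc : ContinuousOn y (Iic T)) (hT : 0 ≤ T)
    (hyM : ∀ u ∈ Icc (0:ℝ) T, ‖y u‖ ≤ M) (hM : 0 ≤ M)
    (hξ : max (etaNorm η φ) M ≤ ξ) (hκ0 : 0 < κ)
    (hκ : ∀ ψ₁ ψ₂ : ℝ → F, BUCmem η ψ₁ → BUCmem η ψ₂ → etaNorm η ψ₁ ≤ ξ →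
      etaNorm η ψ₂ ≤ ξ → ‖f ψ₁ - f ψ₂‖ ≤ κ * etaNorm η (fun θ => ψ₁ θ - ψ₂ θ)) :
    ContinuousOn (fun s => f (fun θ => y (s + θ))) (Icc 0 T) := by
  apply UniformContinuousOn.continuousOn
  rw [Metric.uniformContinuousOn_iff]
  intro ε hε
  obtain ⟨δ, hδ, H⟩ := shift_diff_mod hη hφ hy0 hyc hT (ε / (2 * κ)) (by positivity)
  refine ⟨δ, hδ, ?_⟩
  intro s hs s' hs' hss
  have hb1 := bucmem_shift hη hφ hy0 hyc hyM hM hs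
  have hb2 := bucmem_shift hη hφ hy0 hyc hyM hM hs'
  have he1 := le_trans (etaNorm_shift_le hη hφ.2.1 hy0 hyM hM hs) hξ
  have he2 := le_trans (etaNorm_shift_le hη hφ.2.1 hy0 hyM hM hs') hξ
  have hkey := hκ _ _ hb1 hb2 he1 he2
  have hmod := H s hs s' hs' (by rwa [← Real.dist_eq])
  rw [dist_eq_norm]
  calc ‖f (fun θ => y (s + θ)) - f (fun θ => y (s' + θ))‖
      ≤ κ * etaNorm η (fun θ => y (s + θ) - y (s' + θ)) := hkey
    _ ≤ κ * (ε / (2 * κ)) := mul_le_mul_of_nonneg_left hmod (le_of_lt hκ0)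
    _ = ε / 2 := by field_simp
    _ < ε := by linarith

lemma f_norm_bound {G : Type*} [NormedAddCommGroup G] {f : (ℝ → F) → G}
    (hκ0 : 0 ≤ κ)
    (hκ : ∀ ψ₁ ψ₂ : ℝ → F, BUCmem η ψ₁ → BUCmem η ψ₂ → etaNorm η ψ₁ ≤ ξ →
      etaNorm η ψ₂ ≤ ξ → ‖f ψ₁ - f ψ₂‖ ≤ κ * etaNorm η (fun θ => ψ₁ θ - ψ₂ θ))
    (hφ : BUCmem η φ) (hφξ : etaNorm η φ ≤ ξ)
    (hψ : BUCmem η ψ) (hψξ : etaNorm η ψ ≤ ξ) :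
    ‖f ψ‖ ≤ ‖f φ‖ + κ * (2 * ξ) := by
  have h := hκ ψ φ hψ hφ hψξ hφξ
  have h2 : etaNorm η (fun θ => ψ θ - φ θ) ≤ 2 * ξ :=
    le_trans (etaNorm_sub_le hψ.2.1 hφ.2.1) (by linarith)
  have h3 : ‖f ψ‖ - ‖f φ‖ ≤ ‖f ψ - f φ‖ := norm_sub_norm_le _ _
  have h4 : κ * etaNorm η (fun θ => ψ θ - φ θ) ≤ κ * (2 * ξ) :=
    mul_le_mul_of_nonneg_left h2 hκ0
  linarith

end Helpers3

set_option maxHeartbeats 2000000 in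
/-- if `f` is Lipschitz on bounded sets (of `BUC_η`), `x` solves the FDE
on `[0,τ)` with history `φ ∈ BUC_η`, `τ < ∞`, and `x` is bounded on `[0,τ)`, then the
solution extends beyond `τ`; equivalently, at a finite maximal time the solution blows up. -/
theorem solution_extension (η : ℝ) (hη : 0 < η) (n : ℕ)
    (f : (ℝ → (Fin n → ℝ)) → (Fin n → ℝ))
    (hf : ∀ ξ > (0:ℝ), ∃ κ > (0:ℝ), ∀ φ ψ : ℝ → (Fin n → ℝ),
      BUCmem η φ → BUCmem η ψ → etaNorm η φ ≤ ξ → etaNorm η ψ ≤ ξ →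
      ‖f φ - f ψ‖ ≤ κ * etaNorm η (fun θ => φ θ - ψ θ))
    (hsupp : ∀ φ ψ : ℝ → (Fin n → ℝ), (∀ θ ≤ (0:ℝ), φ θ = ψ θ) → f φ = f ψ)
    (τ : ℝ) (hτ : 0 < τ)
    (φ : ℝ → (Fin n → ℝ)) (hφ : BUCmem η φ)
    (x : ℝ → (Fin n → ℝ))
    (hx0 : ∀ t ≤ (0:ℝ), x t = φ t)
    (hxc : ContinuousOn x (Set.Iio τ))
    (hsol : ∀ t ∈ Set.Ico (0:ℝ) τ, x t = φ 0 + ∫ s in (0:ℝ)..t, f (fun θ => x (s + θ)))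
    (hbd : ∃ M : ℝ, ∀ t ∈ Set.Ico (0:ℝ) τ, ‖x t‖ ≤ M) :
    ∃ ε > (0:ℝ), ∃ y : ℝ → (Fin n → ℝ),
      (∀ t < τ, y t = x t) ∧ ContinuousOn y (Set.Iio (τ + ε)) ∧
      ∀ t ∈ Set.Ico (0:ℝ) (τ + ε), y t = φ 0 + ∫ s in (0:ℝ)..t, f (fun θ => y (s + θ)) := by
  classical
  obtain ⟨M₀, hM₀⟩ := hbd
  set M : ℝ := max M₀ 0 with hMdef
  have hM0 : (0:ℝ) ≤ M := le_max_right _ _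
  have hxM : ∀ t ∈ Set.Ico (0:ℝ) τ, ‖x t‖ ≤ M := fun t ht => le_trans (hM₀ t ht) (le_max_left _ _)
  set ξφ := etaNorm η φ with hξφdef
  have hξφ0 : 0 ≤ ξφ := etaNorm_nonneg η φ
  set ξ : ℝ := max ξφ (M + 1) + 1 with hξdef
  have hmaxnn : (0:ℝ) ≤ max ξφ (M + 1) := le_trans (by linarith) (le_max_right _ _)
  have hξpos : 0 < ξ := by rw [hξdef]; linarith
  have hξφξ : ξφ ≤ ξ := le_trans (le_max_left _ _) (by rw [hξdef]; linarith)
  have hmaxM1 : max ξφ (M + 1) ≤ ξ := by rw [hξdef]; linarith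
  have hmaxM : max ξφ M ≤ ξ := by
    apply max_le (le_trans (le_max_left _ _) hmaxM1)
    exact le_trans (le_trans (by linarith : M ≤ M + 1) (le_max_right ξφ (M+1))) hmaxM1
  obtain ⟨κ, hκpos, hκ⟩ := hf ξ hξpos
  set B : ℝ := ‖f φ‖ + κ * (2 * ξ) + 1 with hBdef
  have hBpos : 0 < B := by rw [hBdef]; positivity
  set δ : ℝ := min (min (1/(4*(κ+1))) (1/(2*B))) (min (τ/2) (1/2)) with hδdef
  have hδpos : 0 < δ := by
    rw [hδdef]
    apply lt_min (lt_min (by positivity) (by positivity)) (lt_min (by linarith) (by norm_num))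
  have hδ1 : δ ≤ 1/(4*(κ+1)) := le_trans (min_le_left _ _) (min_le_left _ _)
  have hδ2 : δ ≤ 1/(2*B) := le_trans (min_le_left _ _) (min_le_right _ _)
  have hδ3 : δ ≤ τ/2 := le_trans (min_le_right _ _) (min_le_left _ _)
  have hδ4 : δ ≤ 1/2 := le_trans (min_le_right _ _) (min_le_right _ _)
  have hκδ : κ * (2*δ) ≤ 1/2 := by
    have h1 : δ * (4*(κ+1)) ≤ 1 := by
      rw [← le_div_iff₀ (by positivity)]; exact hδ1
    nlinarith
  have hBδ : B * (2*δ) ≤ 1 := by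
    have h1 : δ * (2*B) ≤ 1 := by
      rw [← le_div_iff₀ (by positivity)]; exact hδ2
    nlinarith
  set σ : ℝ := τ - δ with hσdef
  set b : ℝ := τ + δ with hbdef
  have hσ0 : (0:ℝ) ≤ σ := by rw [hσdef]; linarith
  have hστ : σ < τ := by rw [hσdef]; linarith
  have hσb : σ ≤ b := by rw [hσdef, hbdef]; linarith
  have hτb : τ < b := by rw [hbdef]; linarith
  have hbσ : b - σ = 2*δ := by rw [hσdef, hbdef]; ring
  have h0b : (0:ℝ) ≤ b := by rw [hbdef]; linarith
  have hσb' : σ ≤ b := hσb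
  set c : Fin n → ℝ := x σ with hcdef
  have hcM : ‖c‖ ≤ M := hxM σ ⟨hσ0, hστ⟩
  -- the compact interval and the space of candidate extensions
  haveI : CompactSpace (Set.Icc σ b) := isCompact_iff_compactSpace.mp isCompact_Icc
  set σm : Set.Icc σ b := ⟨σ, left_mem_Icc.2 hσb⟩ with hσmdef
  -- extension operator
  set Zf : C(Set.Icc σ b, Fin n → ℝ) → ℝ → (Fin n → ℝ) :=
    fun z u => if u ≤ σ then x u else z (Set.projIcc σ b hσb u) with hZfdef
  have hZx : ∀ z, ∀ u ≤ σ, Zf z u = x u := fun z u hu => if_pos hu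
  have hZ0 : ∀ z, ∀ u ≤ (0:ℝ), Zf z u = φ u := fun z u hu => by
    rw [hZx z u (by linarith), hx0 u hu]
  have hZmid : ∀ z : C(Set.Icc σ b, Fin n → ℝ), z σm = c →
      ∀ u (hu : u ∈ Set.Icc σ b), Zf z u = z ⟨u, hu⟩ := by
    intro z hz u hu
    rcases eq_or_lt_of_le hu.1 with heq | hlt
    · have : (⟨u, hu⟩ : Set.Icc σ b) = σm := by
        rw [hσmdef]; exact Subtype.ext heq.symm
      rw [this, hz, hZx z u (le_of_eq heq.symm)]
      rw [hcdef, ← heq]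
    · have h1 : ¬ (u ≤ σ) := not_le.2 hlt
      rw [hZfdef]
      simp only [h1, if_false]
      congr 1
      exact Set.projIcc_of_mem hσb hu
  have hZcont : ∀ z : C(Set.Icc σ b, Fin n → ℝ), z σm = c → Continuous (Zf z) := by
    intro z hz
    rw [hZfdef]
    apply continuous_if_le continuous_id continuous_const
    · exact hxc.mono (fun u hu => lt_of_le_of_lt hu hστ)
    · exact (z.continuous.comp continuous_projIcc).continuousOn
    · intro u hu
      simp only [id_eq] at hu
      subst hu
      rw [Set.projIcc_left, ← hσmdef, hz, hcdef]
  have hZM : ∀ z : C(Set.Icc σ b, Fin n → ℝ), (∀ t, ‖z t - c‖ ≤ 1) →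
      ∀ u ∈ Set.Icc (0:ℝ) b, ‖Zf z u‖ ≤ M + 1 := by
    intro z hz1 u hu
    rcases le_or_gt u σ with h | h
    · rw [hZx z u h]
      have : ‖x u‖ ≤ M := hxM u ⟨hu.1, lt_of_le_of_lt h hστ⟩
      linarith
    · have h1 : ¬ (u ≤ σ) := not_le.2 h
      rw [hZfdef]
      simp only [h1, if_false]
      have h2 := hz1 (Set.projIcc σ b hσb u)
      have h3 := norm_add_le (z (Set.projIcc σ b hσb u) - c) c
      rw [sub_add_cancel] at h3
      linarith
  -- the closed set S
  set S : Set C(Set.Icc σ b, Fin n → ℝ) :=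
    {z | (∀ t, ‖z t - c‖ ≤ 1) ∧ z σm = c} with hSdef
  have hSclosed : IsClosed S := by
    rw [hSdef, Set.setOf_and]
    apply IsClosed.inter
    · have : {z : C(Set.Icc σ b, Fin n → ℝ) | ∀ t, ‖z t - c‖ ≤ 1}
          = ⋂ t, {z : C(Set.Icc σ b, Fin n → ℝ) | ‖z t - c‖ ≤ 1} := by
        ext z; simp [Set.mem_iInter]
      rw [this]
      apply isClosed_iInter
      intro t
      exact IsClosed.preimage (continuous_eval_const t)
        (isClosed_le ((continuous_id.sub continuous_const).norm) continuous_const)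
    · exact isClosed_eq (continuous_eval_const σm) continuous_const
  -- continuity and boundedness of the integrands
  have hκ' : ∀ ψ₁ ψ₂ : ℝ → (Fin n → ℝ), BUCmem η ψ₁ → BUCmem η ψ₂ → etaNorm η ψ₁ ≤ ξ →
      etaNorm η ψ₂ ≤ ξ → ‖f ψ₁ - f ψ₂‖ ≤ κ * etaNorm η (fun θ => ψ₁ θ - ψ₂ θ) := hκ
  have hFZcont : ∀ z ∈ S, ContinuousOn (fun s => f (fun θ => Zf z (s + θ))) (Set.Icc 0 b) := by
    intro z hz
    exact contOn_f_shift hη hφ (hZ0 z) ((hZcont z hz.2).continuousOn) h0b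
      (hZM z hz.1) (by linarith) hmaxM1 hκpos hκ'
  have hFZbd : ∀ z ∈ S, ∀ s ∈ Set.Icc (0:ℝ) b, ‖f (fun θ => Zf z (s + θ))‖ ≤ B := by
    intro z hz s hs
    have h1 := f_norm_bound (le_of_lt hκpos) hκ' hφ hξφξ
      (bucmem_shift hη hφ (hZ0 z) ((hZcont z hz.2).continuousOn) (hZM z hz.1) (by linarith) hs)
      (le_trans (etaNorm_shift_le hη hφ.2.1 (hZ0 z) (hZM z hz.1) (by linarith) hs) hmaxM1)
    rw [hBdef]
    linarith
  have hx0' : ∀ u ≤ (0:ℝ), x u = φ u := hx0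
  have hFxcont : ∀ T, 0 ≤ T → T < τ →
      ContinuousOn (fun s => f (fun θ => x (s + θ))) (Set.Icc 0 T) := by
    intro T hT0 hTτ
    exact contOn_f_shift hη hφ hx0' (hxc.mono (fun u hu => lt_of_le_of_lt hu hTτ)) hT0
      (fun u hu => hxM u ⟨hu.1, lt_of_le_of_lt hu.2 hTτ⟩) hM0 hmaxM hκpos hκ'
  -- primitive of the integrand
  have hprim : ∀ z ∈ S, ContinuousOn
      (fun r => c + ∫ s in σ..r, f (fun θ => Zf z (s + θ))) (Set.Icc σ b) := by
    intro z hz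
    apply continuousOn_const.add
    have hint : MeasureTheory.IntegrableOn (fun s => f (fun θ => Zf z (s + θ)))
        (Set.uIcc σ b) MeasureTheory.volume := by
      rw [uIcc_of_le hσb]
      apply ContinuousOn.integrableOn_Icc
      exact (hFZcont z hz).mono (Set.Icc_subset_Icc_left hσ0)
    have := intervalIntegral.continuousOn_primitive_interval hint
    rwa [uIcc_of_le hσb] at this
  have hIib : ∀ t : Set.Icc σ b, Set.uIcc σ (t:ℝ) ⊆ Set.Icc 0 b := by
    intro t
    rw [uIcc_of_le t.2.1]
    intro s hs
    exact ⟨le_trans hσ0 hs.1, le_trans hs.2 t.2.2⟩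
  have hZint : ∀ z ∈ S, ∀ t : Set.Icc σ b,
      IntervalIntegrable (fun s => f (fun θ => Zf z (s + θ))) MeasureTheory.volume σ (t:ℝ) := by
    intro z hz t
    exact ((hFZcont z hz).mono (hIib t)).intervalIntegrable
  -- the Picard operator
  set Tfun : ↥S → C(Set.Icc σ b, Fin n → ℝ) := fun z =>
    ⟨fun t => c + ∫ s in σ..(t:ℝ), f (fun θ => Zf (↑z) (s + θ)),
      continuousOn_iff_continuous_restrict.mp (hprim ↑z z.2)⟩ with hTfundef
  have hTS : ∀ z : ↥S, Tfun z ∈ S := by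
    intro z
    constructor
    · intro t
      have heval : (Tfun z) t = c + ∫ s in σ..(t:ℝ), f (fun θ => Zf (↑z) (s + θ)) := rfl
      rw [heval, add_sub_cancel_left]
      have hbnd : ∀ s ∈ Set.uIoc σ (t:ℝ), ‖f (fun θ => Zf (↑z) (s + θ))‖ ≤ B := by
        intro s hs
        rw [Set.uIoc_of_le t.2.1] at hs
        exact hFZbd ↑z z.2 s ⟨le_trans hσ0 (le_of_lt hs.1), le_trans hs.2 t.2.2⟩
      have h1 := intervalIntegral.norm_integral_le_of_norm_le_const hbnd
      have h2 : |(t:ℝ) - σ| ≤ 2*δ := by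
        rw [abs_of_nonneg (by linarith [t.2.1])]
        linarith [t.2.2]
      calc ‖∫ s in σ..(t:ℝ), f (fun θ => Zf (↑z) (s + θ))‖ ≤ B * |(t:ℝ) - σ| := h1
        _ ≤ B * (2*δ) := mul_le_mul_of_nonneg_left h2 (le_of_lt hBpos)
        _ ≤ 1 := hBδ
    · have heval : (Tfun z) σm = c + ∫ s in σ..σ, f (fun θ => Zf (↑z) (s + θ)) := rfl
      rw [heval, intervalIntegral.integral_same, add_zero]
  set Tmap : ↥S → ↥S := fun z => ⟨Tfun z, hTS z⟩ with hTmapdef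
  -- contraction estimate
  have hZdiff : ∀ z w : ↥S, ∀ s ∈ Set.Icc (0:ℝ) b,
      etaNorm η (fun θ => Zf ↑z (s + θ) - Zf ↑w (s + θ)) ≤ dist z w := by
    intro z w s hs
    apply etaNorm_le dist_nonneg
    intro θ hθ
    rcases le_or_gt (s + θ) σ with h | h
    · rw [hZx ↑z _ h, hZx ↑w _ h, sub_self, norm_zero, mul_zero]
      exact dist_nonneg
    · have hmem : s + θ ∈ Set.Icc σ b := ⟨le_of_lt h, by linarith [hs.2]⟩
      rw [hZmid ↑z z.2.2 _ hmem, hZmid ↑w w.2.2 _ hmem]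
      have h1 : ‖(↑z : C(Set.Icc σ b, Fin n → ℝ)) ⟨s + θ, hmem⟩
          - (↑w : C(Set.Icc σ b, Fin n → ℝ)) ⟨s + θ, hmem⟩‖ ≤ dist z w := by
        rw [← dist_eq_norm, Subtype.dist_eq]
        exact ContinuousMap.dist_apply_le_dist _
      calc Real.exp (η * θ) * ‖(↑z : C(Set.Icc σ b, Fin n → ℝ)) ⟨s + θ, hmem⟩
            - (↑w : C(Set.Icc σ b, Fin n → ℝ)) ⟨s + θ, hmem⟩‖
          ≤ 1 * dist z w := mul_le_mul (Real.exp_le_one_iff.2 (by nlinarith)) h1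
            (norm_nonneg _) (by norm_num)
        _ = dist z w := one_mul _
  have hcontract : ∀ z w : ↥S, dist (Tmap z) (Tmap w) ≤ (1/2) * dist z w := by
    intro z w
    have hpos : (0:ℝ) ≤ (1/2) * dist z w := by positivity
    rw [Subtype.dist_eq]
    rw [ContinuousMap.dist_le hpos]
    intro t
    have heval1 : ((Tmap z : ↥S) : C(Set.Icc σ b, Fin n → ℝ)) t
        = c + ∫ s in σ..(t:ℝ), f (fun θ => Zf (↑z) (s + θ)) := rfl
    have heval2 : ((Tmap w : ↥S) : C(Set.Icc σ b, Fin n → ℝ)) t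
        = c + ∫ s in σ..(t:ℝ), f (fun θ => Zf (↑w) (s + θ)) := rfl
    rw [dist_eq_norm, heval1, heval2, add_sub_add_left_eq_sub,
      ← intervalIntegral.integral_sub (hZint ↑z z.2 t) (hZint ↑w w.2 t)]
    have hbnd : ∀ s ∈ Set.uIoc σ (t:ℝ),
        ‖f (fun θ => Zf (↑z) (s + θ)) - f (fun θ => Zf (↑w) (s + θ))‖ ≤ κ * dist z w := by
      intro s hs
      rw [Set.uIoc_of_le t.2.1] at hs
      have hsmem : s ∈ Set.Icc (0:ℝ) b := ⟨le_trans hσ0 (le_of_lt hs.1), le_trans hs.2 t.2.2⟩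
      have hb1 := bucmem_shift hη hφ (hZ0 ↑z) ((hZcont ↑z z.2.2).continuousOn)
        (hZM ↑z z.2.1) (by linarith) hsmem
      have hb2 := bucmem_shift hη hφ (hZ0 ↑w) ((hZcont ↑w w.2.2).continuousOn)
        (hZM ↑w w.2.1) (by linarith) hsmem
      have he1 := le_trans (etaNorm_shift_le hη hφ.2.1 (hZ0 ↑z) (hZM ↑z z.2.1)
        (by linarith) hsmem) hmaxM1
      have he2 := le_trans (etaNorm_shift_le hη hφ.2.1 (hZ0 ↑w) (hZM ↑w w.2.1)
        (by linarith) hsmem) hmaxM1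
      calc ‖f (fun θ => Zf (↑z) (s + θ)) - f (fun θ => Zf (↑w) (s + θ))‖
          ≤ κ * etaNorm η (fun θ => Zf ↑z (s + θ) - Zf ↑w (s + θ)) := hκ' _ _ hb1 hb2 he1 he2
        _ ≤ κ * dist z w := mul_le_mul_of_nonneg_left (hZdiff z w s hsmem) (le_of_lt hκpos)
    have h1 := intervalIntegral.norm_integral_le_of_norm_le_const hbnd
    have h2 : |(t:ℝ) - σ| ≤ 2*δ := by
      rw [abs_of_nonneg (by linarith [t.2.1])]
      linarith [t.2.2]
    calc ‖∫ s in σ..(t:ℝ), (f (fun θ => Zf (↑z) (s + θ)) - f (fun θ => Zf (↑w) (s + θ)))‖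
        ≤ κ * dist z w * |(t:ℝ) - σ| := h1
      _ ≤ κ * dist z w * (2*δ) := mul_le_mul_of_nonneg_left h2
          (mul_nonneg (le_of_lt hκpos) dist_nonneg)
      _ = (κ * (2*δ)) * dist z w := by ring
      _ ≤ (1/2) * dist z w := mul_le_mul_of_nonneg_right hκδ dist_nonneg
  haveI : Nonempty ↥S := ⟨⟨ContinuousMap.const _ c, fun t => by simp, rfl⟩⟩
  haveI : CompleteSpace ↥S := hSclosed.completeSpace_coe
  have hCW : ContractingWith (1/2 : NNReal) Tmap := by
    constructor
    · rw [← NNReal.coe_lt_coe]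
      norm_num
    · apply LipschitzWith.of_dist_le_mul
      intro z w
      have := hcontract z w
      rw [NNReal.coe_div, NNReal.coe_one, NNReal.coe_ofNat]
      linarith
  set zstar : ↥S := hCW.fixedPoint Tmap with hzstardef
  have hfix : Tmap zstar = zstar := hCW.fixedPoint_isFixedPt
  -- the extended solution
  set y : ℝ → (Fin n → ℝ) := Zf ↑zstar with hydef
  have hy0 : ∀ u ≤ (0:ℝ), y u = φ u := hZ0 ↑zstar
  have hyx : ∀ u ≤ σ, y u = x u := hZx ↑zstar
  have hycont : Continuous y := hZcont ↑zstar zstar.2.2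
  have hyM : ∀ u ∈ Set.Icc (0:ℝ) b, ‖y u‖ ≤ M + 1 := hZM ↑zstar zstar.2.1
  have hyeq : ∀ t, ∀ ht : t ∈ Set.Icc σ b,
      y t = c + ∫ s in σ..t, f (fun θ => y (s + θ)) := by
    intro t ht
    have h1 : y t = (↑zstar : C(Set.Icc σ b, Fin n → ℝ)) ⟨t, ht⟩ :=
      hZmid ↑zstar zstar.2.2 t ht
    have h2 : ((Tmap zstar : ↥S) : C(Set.Icc σ b, Fin n → ℝ)) ⟨t, ht⟩
        = (↑zstar : C(Set.Icc σ b, Fin n → ℝ)) ⟨t, ht⟩ := by rw [hfix]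
    have h3 : ((Tmap zstar : ↥S) : C(Set.Icc σ b, Fin n → ℝ)) ⟨t, ht⟩
        = c + ∫ s in σ..t, f (fun θ => Zf ↑zstar (s + θ)) := rfl
    rw [h1, ← h2]
    exact h3
  have hycontF : ContinuousOn (fun s => f (fun θ => y (s + θ))) (Set.Icc 0 b) :=
    hFZcont ↑zstar zstar.2
  have hyint : ∀ a₁ a₂ : ℝ, 0 ≤ a₁ → a₁ ≤ a₂ → a₂ ≤ b →
      IntervalIntegrable (fun s => f (fun θ => y (s + θ))) MeasureTheory.volume a₁ a₂ := by
    intro a₁ a₂ h1 h2 h3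
    apply ContinuousOn.intervalIntegrable
    apply hycontF.mono
    rw [uIcc_of_le h2]
    intro s hs
    exact ⟨le_trans h1 hs.1, le_trans hs.2 h3⟩
  have hxint : ∀ T a₁ a₂ : ℝ, 0 ≤ T → T < τ → 0 ≤ a₁ → a₁ ≤ a₂ → a₂ ≤ T →
      IntervalIntegrable (fun s => f (fun θ => x (s + θ))) MeasureTheory.volume a₁ a₂ := by
    intro T a₁ a₂ h0 h1 h2 h3 h4
    apply ContinuousOn.intervalIntegrable
    apply (hFxcont T h0 h1).mono
    rw [uIcc_of_le h3]
    intro s hs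
    exact ⟨le_trans h2 hs.1, le_trans hs.2 h4⟩
  have hxdiff : ∀ t, σ ≤ t → t < τ → x t = c + ∫ s in σ..t, f (fun θ => x (s + θ)) := by
    intro t ht1 ht2
    have e1 := hsol t ⟨le_trans hσ0 ht1, ht2⟩
    have e2 := hsol σ ⟨hσ0, hστ⟩
    have hi1 := hxint t 0 t (le_trans hσ0 ht1) ht2 le_rfl (le_trans hσ0 ht1) le_rfl
    have hi2 := hxint t 0 σ (le_trans hσ0 ht1) ht2 le_rfl hσ0 ht1
    have hsub := intervalIntegral.integral_interval_sub_left hi1 hi2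
    rw [hcdef, e1, e2, ← hsub]
    abel
  -- uniqueness of the fixed point on [σ, τ)
  have hxMT : ∀ T', T' < τ → ∀ u ∈ Set.Icc (0:ℝ) T', ‖x u‖ ≤ M := by
    intro T' hT' u hu
    exact hxM u ⟨hu.1, lt_of_le_of_lt hu.2 hT'⟩
  have huniq : ∀ t, σ ≤ t → t < τ → y t = x t := by
    intro T' hT'1 hT'2
    have hxcT : ContinuousOn x (Set.Iic T') :=
      hxc.mono (fun u hu => lt_of_le_of_lt hu hT'2)
    have hDcont : ContinuousOn (fun u => ‖y u - x u‖) (Set.Icc σ T') :=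
      ((hycont.continuousOn).sub (hxc.mono (fun u hu => lt_of_le_of_lt hu.2 hT'2))).norm
    obtain ⟨t₀, ht₀mem, ht₀max⟩ :=
      isCompact_Icc.exists_isMaxOn (Set.nonempty_Icc.2 hT'1) hDcont
    rw [isMaxOn_iff] at ht₀max
    set V := ‖y t₀ - x t₀‖ with hVdef
    have hV0 : 0 ≤ V := norm_nonneg _
    have ht₀b : t₀ ∈ Set.Icc σ b := ⟨ht₀mem.1, by
      have := ht₀mem.2; rw [hbdef]; linarith⟩
    have ht₀τ : t₀ < τ := lt_of_le_of_lt ht₀mem.2 hT'2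
    have hyt₀ := hyeq t₀ ht₀b
    have hxt₀ := hxdiff t₀ ht₀mem.1 ht₀τ
    have hiy := hyint σ t₀ hσ0 ht₀mem.1 ht₀b.2
    have hix := hxint T' σ t₀ (le_trans hσ0 hT'1) hT'2 hσ0 ht₀mem.1 ht₀mem.2
    have hdiffeq : y t₀ - x t₀
        = ∫ s in σ..t₀, (f (fun θ => y (s + θ)) - f (fun θ => x (s + θ))) := by
      rw [hyt₀, hxt₀, add_sub_add_left_eq_sub, ← intervalIntegral.integral_sub hiy hix]
    have hbnd : ∀ s ∈ Set.uIoc σ t₀,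
        ‖f (fun θ => y (s + θ)) - f (fun θ => x (s + θ))‖ ≤ κ * V := by
      intro s hs
      rw [Set.uIoc_of_le ht₀mem.1] at hs
      have hs0 : (0:ℝ) ≤ s := le_trans hσ0 (le_of_lt hs.1)
      have hsmemb : s ∈ Set.Icc (0:ℝ) b := ⟨hs0, le_trans hs.2 ht₀b.2⟩
      have hsmemT : s ∈ Set.Icc (0:ℝ) T' := ⟨hs0, le_trans hs.2 ht₀mem.2⟩
      have hby := bucmem_shift hη hφ hy0 (hycont.continuousOn) hyM (by linarith) hsmemb
      have hbx := bucmem_shift hη hφ hx0' hxcT (hxMT T' hT'2) hM0 hsmemT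
      have hey := le_trans (etaNorm_shift_le hη hφ.2.1 hy0 hyM (by linarith) hsmemb) hmaxM1
      have hex := le_trans (etaNorm_shift_le hη hφ.2.1 hx0' (hxMT T' hT'2) hM0 hsmemT) hmaxM
      have hstep := hκ' _ _ hby hbx hey hex
      have hVbound : etaNorm η (fun θ => y (s + θ) - x (s + θ)) ≤ V := by
        apply etaNorm_le hV0
        intro θ hθ
        rcases le_or_gt (s + θ) σ with h | h
        · rw [hyx _ h, sub_self, norm_zero, mul_zero]
          exact hV0
        · have hu : s + θ ∈ Set.Icc σ T' := ⟨le_of_lt h, by linarith [hs.2, ht₀mem.2]⟩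
          have hmax := ht₀max _ hu
          calc Real.exp (η * θ) * ‖y (s + θ) - x (s + θ)‖
              ≤ 1 * V := mul_le_mul (Real.exp_le_one_iff.2 (by nlinarith)) hmax
                (norm_nonneg _) (by norm_num)
            _ = V := one_mul _
      calc ‖f (fun θ => y (s + θ)) - f (fun θ => x (s + θ))‖
          ≤ κ * etaNorm η (fun θ => y (s + θ) - x (s + θ)) := hstep
        _ ≤ κ * V := mul_le_mul_of_nonneg_left hVbound (le_of_lt hκpos)
    have h1 := intervalIntegral.norm_integral_le_of_norm_le_const hbnd
    have h2 : |t₀ - σ| ≤ 2*δ := by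
      rw [abs_of_nonneg (by linarith [ht₀mem.1])]
      have : t₀ ≤ b := ht₀b.2
      linarith
    have hVle : V ≤ (1/2) * V := by
      calc V = ‖y t₀ - x t₀‖ := hVdef
        _ = ‖∫ s in σ..t₀, (f (fun θ => y (s + θ)) - f (fun θ => x (s + θ)))‖ := by
            rw [hdiffeq]
        _ ≤ κ * V * |t₀ - σ| := h1
        _ ≤ κ * V * (2*δ) := mul_le_mul_of_nonneg_left h2 (by positivity)
        _ = (κ * (2*δ)) * V := by ring
        _ ≤ (1/2) * V := mul_le_mul_of_nonneg_right hκδ hV0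
    have hVzero : V = 0 := le_antisymm (by linarith) hV0
    have hfin := ht₀max T' ⟨hT'1, le_refl T'⟩
    have hfin2 : ‖y T' - x T'‖ ≤ 0 := by rw [← hVzero]; exact hfin
    have hfin3 : ‖y T' - x T'‖ = 0 := le_antisymm hfin2 (norm_nonneg _)
    exact sub_eq_zero.1 (norm_eq_zero.1 hfin3)
  -- congruence between the x-integrand and y-integrand on [0, σ]
  have hEx : ∀ t', 0 ≤ t' → t' ≤ σ →
      (∫ s in (0:ℝ)..t', f (fun θ => x (s + θ)))
        = ∫ s in (0:ℝ)..t', f (fun θ => y (s + θ)) := by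
    intro t' h0 h1
    apply intervalIntegral.integral_congr
    intro s hs
    rw [uIcc_of_le h0] at hs
    apply hsupp
    intro θ hθ
    exact (hyx _ (by linarith [hs.2])).symm
  -- final assembly
  refine ⟨δ, hδpos, y, ?_, ?_, ?_⟩
  · intro t ht
    rcases le_or_gt t σ with h | h
    · exact hyx t h
    · exact huniq t (le_of_lt h) ht
  · exact hycont.continuousOn
  · intro t ht
    obtain ⟨ht0, htb⟩ := ht
    rcases le_or_gt t σ with htσ | htσ
    · rw [hyx t htσ, hsol t ⟨ht0, lt_of_le_of_lt htσ hστ⟩, hEx t ht0 htσ]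
    · have htmem : t ∈ Set.Icc σ b := ⟨le_of_lt htσ, by rw [hbdef]; linarith⟩
      rw [hyeq t htmem]
      have hc2 : c = φ 0 + ∫ s in (0:ℝ)..σ, f (fun θ => y (s + θ)) := by
        rw [hcdef, hsol σ ⟨hσ0, hστ⟩, hEx σ hσ0 le_rfl]
      rw [hc2, add_assoc]
      congr 1
      exact intervalIntegral.integral_add_adjacent_intervals
        (hyint 0 σ le_rfl hσ0 hσb') (hyint σ t hσ0 (le_of_lt htσ) htmem.2)
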